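/- arXiv:1711.08494 — 2 statements merged into one kernel-verified Lean document; each statement's English description precedes it below -/
import Mathlib

section
/- For every n×n matrix a with entries in {−1,+1} there exist vectors x, y ∈ {−1,+1}ⁿ such that Σᵢⱼ aᵢⱼ xᵢ yⱼ ≥ n^{3/2}/√3. -/
open Finset

private def gbEps (b : Bool) : ℝ := if b then 1 else -1

private lemma gbEps_sq (b : Bool) : gbEps b ^ 2 = 1 := by
  cases b <;> simp [gbEps]

private lemma gb_sum_split (n : ℕ) (f : (Fin (n+1) → Bool) → ℝ) :
    ∑ s : Fin (n+1) → Bool, f s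
      = ∑ b : Bool, ∑ s : Fin n → Bool, f (Fin.cons b s) := by
  rw [← Equiv.sum_comp (Fin.consEquiv fun _ => Bool) f, Fintype.sum_prod_type]
  rfl

private lemma gb_moments : ∀ (n : ℕ) (c : Fin n → ℝ), (∀ j, c j ^ 2 = 1) →
    (∑ s : Fin n → Bool, (∑ j, c j * gbEps (s j)) ^ 2 = 2 ^ n * n) ∧
    (∑ s : Fin n → Bool, (∑ j, c j * gbEps (s j)) ^ 4
        = 2 ^ n * (3 * (n:ℝ) ^ 2 - 2 * n)) := by
  intro n
  induction n with
  | zero => intro c hc; simp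
  | succ n ih =>
    intro c hc
    have hc' : ∀ j : Fin n, (c j.succ) ^ 2 = 1 := fun j => hc j.succ
    obtain ⟨ih2, ih4⟩ := ih (fun j => c j.succ) hc'
    set B : (Fin n → Bool) → ℝ := fun s => ∑ j : Fin n, c j.succ * gbEps (s j)
      with hB
    have hR : ∀ (b : Bool) (s : Fin n → Bool),
        (∑ j : Fin (n+1), c j * gbEps ((Fin.cons b s : Fin (n+1) → Bool) j)) = c 0 * gbEps b + B s := by
      intro b s
      rw [Fin.sum_univ_succ]
      simp [hB]
    have hA0 : (c 0) ^ 2 = 1 := hc 0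
    have hcard : (Finset.univ : Finset (Fin n → Bool)).card = 2 ^ n := by
      simp [Finset.card_univ]
    constructor
    · rw [gb_sum_split]
      have step : ∀ b : Bool, ∑ s : Fin n → Bool,
          (∑ j : Fin (n+1), c j * gbEps ((Fin.cons b s : Fin (n+1) → Bool) j)) ^ 2
          = 2 ^ n + (2 * (c 0 * gbEps b)) * (∑ s : Fin n → Bool, B s)
            + 2 ^ n * n := by
        intro b
        have expand : ∀ s : Fin n → Bool,
            (∑ j : Fin (n+1), c j * gbEps ((Fin.cons b s : Fin (n+1) → Bool) j)) ^ 2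
            = 1 + (2 * (c 0 * gbEps b)) * B s + B s ^ 2 := by
          intro s
          rw [hR b s]
          have h1 : (c 0 * gbEps b) ^ 2 = 1 := by
            rw [mul_pow, hA0, gbEps_sq]; ring
          nlinarith [h1]
        rw [Finset.sum_congr rfl fun s _ => expand s]
        rw [Finset.sum_add_distrib, Finset.sum_add_distrib, ← Finset.mul_sum, ih2]
        simp [hcard]
      rw [Finset.sum_congr rfl fun b _ => step b, Fintype.sum_bool]
      norm_num [gbEps]
      push_cast
      ring
    · rw [gb_sum_split]
      have step : ∀ b : Bool, ∑ s : Fin n → Bool,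
          (∑ j : Fin (n+1), c j * gbEps ((Fin.cons b s : Fin (n+1) → Bool) j)) ^ 4
          = 2 ^ n + (4 * (c 0 * gbEps b)) * (∑ s : Fin n → Bool, B s)
            + 6 * (2 ^ n * n)
            + (4 * (c 0 * gbEps b)) * (∑ s : Fin n → Bool, B s ^ 3)
            + 2 ^ n * (3 * (n:ℝ) ^ 2 - 2 * n) := by
        intro b
        have expand : ∀ s : Fin n → Bool,
            (∑ j : Fin (n+1), c j * gbEps ((Fin.cons b s : Fin (n+1) → Bool) j)) ^ 4
            = 1 + (4 * (c 0 * gbEps b)) * B s + 6 * B s ^ 2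
              + (4 * (c 0 * gbEps b)) * B s ^ 3 + B s ^ 4 := by
          intro s
          rw [hR b s]
          have h1 : (c 0 * gbEps b) ^ 2 = 1 := by
            rw [mul_pow, hA0, gbEps_sq]; ring
          nlinarith [h1, sq_nonneg (B s), sq_nonneg (c 0 * gbEps b + B s)]
        rw [Finset.sum_congr rfl fun s _ => expand s]
        rw [Finset.sum_add_distrib, Finset.sum_add_distrib, Finset.sum_add_distrib,
          Finset.sum_add_distrib, ← Finset.mul_sum, ← Finset.mul_sum,
          ← Finset.mul_sum, ih2, ih4]
        simp [hcard]
      rw [Finset.sum_congr rfl fun b _ => step b, Fintype.sum_bool]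
      norm_num [gbEps]
      push_cast
      ring

/-- Khintchine-type lower bound for a single row, via the fourth-moment method. -/
private lemma gb_abs_lower (n : ℕ) (hn : 0 < n) (c : Fin n → ℝ)
    (hc : ∀ j, c j ^ 2 = 1) :
    2 ^ n * (Real.sqrt n / Real.sqrt 3)
      ≤ ∑ s : Fin n → Bool, |∑ j, c j * gbEps (s j)| := by
  obtain ⟨m2, m4⟩ := gb_moments n c hc
  set R : (Fin n → Bool) → ℝ := fun s => ∑ j, c j * gbEps (s j) with hRdef
  set L : ℝ := ∑ s : Fin n → Bool, |R s| with hL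
  set A : ℝ := ∑ s : Fin n → Bool, R s ^ 2 with hA
  set Bm : ℝ := ∑ s : Fin n → Bool, R s ^ 4 with hBm
  have hL0 : 0 ≤ L := Finset.sum_nonneg fun s _ => abs_nonneg _
  -- Cauchy–Schwarz 1 :  A^2 ≤ L * C  where C = ∑ |R|^3
  set C : ℝ := ∑ s : Fin n → Bool, |R s| ^ 3 with hC
  have cs1 : A ^ 2 ≤ L * C := by
    have := Finset.sum_mul_sq_le_sq_mul_sq Finset.univ
      (fun s : Fin n → Bool => Real.sqrt |R s|)
      (fun s : Fin n → Bool => |R s| * Real.sqrt |R s|)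
    have e1 : ∀ s : Fin n → Bool,
        Real.sqrt |R s| * (|R s| * Real.sqrt |R s|) = R s ^ 2 := by
      intro s
      rw [show Real.sqrt |R s| * (|R s| * Real.sqrt |R s|)
          = (Real.sqrt |R s| * Real.sqrt |R s|) * |R s| by ring,
        Real.mul_self_sqrt (abs_nonneg _), ← abs_mul, abs_mul_self, sq]
    have e2 : ∀ s : Fin n → Bool, (Real.sqrt |R s|) ^ 2 = |R s| :=
      fun s => Real.sq_sqrt (abs_nonneg _)
    have e3 : ∀ s : Fin n → Bool,
        (|R s| * Real.sqrt |R s|) ^ 2 = |R s| ^ 3 := by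
      intro s
      rw [mul_pow, Real.sq_sqrt (abs_nonneg _)]; ring
    rw [Finset.sum_congr rfl fun s _ => e1 s,
      Finset.sum_congr rfl fun s _ => e2 s,
      Finset.sum_congr rfl fun s _ => e3 s] at this
    exact this
  -- Cauchy–Schwarz 2 :  C^2 ≤ A * Bm
  have cs2 : C ^ 2 ≤ A * Bm := by
    have := Finset.sum_mul_sq_le_sq_mul_sq Finset.univ
      (fun s : Fin n → Bool => |R s|) (fun s : Fin n → Bool => R s ^ 2)
    have e1 : ∀ s : Fin n → Bool, |R s| * R s ^ 2 = |R s| ^ 3 := by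
      intro s
      rw [← sq_abs]; ring
    have e2 : ∀ s : Fin n → Bool, |R s| ^ 2 = R s ^ 2 := fun s => sq_abs _
    have e3 : ∀ s : Fin n → Bool, (R s ^ 2) ^ 2 = R s ^ 4 := by intro s; ring
    rw [Finset.sum_congr rfl fun s _ => e1 s,
      Finset.sum_congr rfl fun s _ => e2 s,
      Finset.sum_congr rfl fun s _ => e3 s] at this
    exact this
  have hAval : A = 2 ^ n * n := m2
  have hBval : Bm = 2 ^ n * (3 * (n:ℝ) ^ 2 - 2 * n) := m4
  have hnR : (1:ℝ) ≤ n := by exact_mod_cast hn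
  have hpow : (0:ℝ) < 2 ^ n := by positivity
  have hApos : 0 < A := by rw [hAval]; positivity
  have hBpos : 0 < Bm := by
    rw [hBval]; nlinarith
  -- combine: A^3 ≤ L^2 * Bm
  have key : A ^ 3 ≤ L ^ 2 * Bm := by
    have h1 : A ^ 4 ≤ L ^ 2 * (A * Bm) := by
      calc A ^ 4 = (A ^ 2) ^ 2 := by ring
        _ ≤ (L * C) ^ 2 := by
            apply pow_le_pow_left₀ (sq_nonneg A) ?_ 2 |>.trans_eq rfl
            · exact cs1
        _ = L ^ 2 * C ^ 2 := by ring
        _ ≤ L ^ 2 * (A * Bm) := by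
            apply mul_le_mul_of_nonneg_left cs2 (sq_nonneg L)
    nlinarith [h1, hApos]
  -- Bm ≤ 3 * 2^n * n^2
  have hBle : Bm ≤ 3 * 2 ^ n * (n:ℝ) ^ 2 := by
    rw [hBval]; nlinarith
  have hL2 : (2 ^ n * (Real.sqrt n / Real.sqrt 3)) ^ 2 ≤ L ^ 2 := by
    have hsn : (Real.sqrt (n:ℝ)) ^ 2 = n := Real.sq_sqrt (by positivity)
    have hs3 : (Real.sqrt 3) ^ 2 = 3 := Real.sq_sqrt (by norm_num)
    have hs3pos : (0:ℝ) < Real.sqrt 3 := Real.sqrt_pos.mpr (by norm_num)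
    have lhs_eq : (2 ^ n * (Real.sqrt (n:ℝ) / Real.sqrt 3)) ^ 2
        = ((2:ℝ) ^ n) ^ 2 * (n:ℝ) / 3 := by
      rw [mul_pow, div_pow, hsn, hs3]
      ring
    rw [lhs_eq]
    -- from key : (2^n n)^3 ≤ L^2 * Bm ≤ L^2 * 3 * 2^n * n^2
    have key2 : (2 ^ n * (n:ℝ)) ^ 3 ≤ L ^ 2 * (3 * 2 ^ n * (n:ℝ) ^ 2) := by
      calc (2 ^ n * (n:ℝ)) ^ 3 = A ^ 3 := by rw [hAval]
        _ ≤ L ^ 2 * Bm := key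
        _ ≤ L ^ 2 * (3 * 2 ^ n * (n:ℝ) ^ 2) :=
            mul_le_mul_of_nonneg_left hBle (sq_nonneg L)
    have hn2 : (0:ℝ) < (n:ℝ) ^ 2 := by positivity
    rw [div_le_iff₀ (by norm_num : (0:ℝ) < 3)]
    nlinarith [key2, mul_pos hpow hn2, sq_nonneg L]
  have hlhs0 : 0 ≤ 2 ^ n * (Real.sqrt (n:ℝ) / Real.sqrt 3) := by positivity
  nlinarith [hL2, hlhs0, hL0]

/-- Gale–Berlekamp switching game: for every `n × n` matrix with `±1` entries there
exist `x, y ∈ {−1,+1}ⁿ` with `Σᵢⱼ aᵢⱼ xᵢ yⱼ ≥ n^{3/2}/√3`. -/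
theorem gale_berlekamp_exists (n : ℕ) (a : Fin n → Fin n → ℝ)
    (ha : ∀ i j, a i j = 1 ∨ a i j = -1) :
    ∃ x y : Fin n → ℝ, (∀ i, x i = 1 ∨ x i = -1) ∧ (∀ j, y j = 1 ∨ y j = -1) ∧
      (n : ℝ) ^ ((3 : ℝ) / 2) / Real.sqrt 3 ≤ ∑ i, ∑ j, a i j * x i * y j := by
  rcases Nat.eq_zero_or_pos n with hn | hn
  · subst hn
    refine ⟨fun _ => 1, fun _ => 1, fun i => Or.inl rfl, fun j => Or.inl rfl, ?_⟩
    simp [Real.zero_rpow]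
  -- average of ∑ i |R_i| over all sign vectors
  have hasq : ∀ i j, a i j ^ 2 = 1 := by
    intro i j; rcases ha i j with h | h <;> rw [h] <;> norm_num
  have rowbound : ∀ i : Fin n,
      2 ^ n * (Real.sqrt n / Real.sqrt 3)
        ≤ ∑ s : Fin n → Bool, |∑ j, a i j * gbEps (s j)| :=
    fun i => gb_abs_lower n hn (a i) (hasq i)
  have total : 2 ^ n * ((n:ℝ) * (Real.sqrt n / Real.sqrt 3))
      ≤ ∑ s : Fin n → Bool, ∑ i : Fin n, |∑ j, a i j * gbEps (s j)| := by
    rw [Finset.sum_comm]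
    calc 2 ^ n * ((n:ℝ) * (Real.sqrt n / Real.sqrt 3))
        = ∑ _i : Fin n, 2 ^ n * (Real.sqrt n / Real.sqrt 3) := by
          rw [Finset.sum_const]; simp; ring
      _ ≤ ∑ i : Fin n, ∑ s : Fin n → Bool, |∑ j, a i j * gbEps (s j)| :=
          Finset.sum_le_sum fun i _ => rowbound i
  -- pigeonhole: some s achieves the average
  have hconst : ∑ _s : Fin n → Bool, (n:ℝ) * (Real.sqrt n / Real.sqrt 3)
      = 2 ^ n * ((n:ℝ) * (Real.sqrt n / Real.sqrt 3)) := by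
    rw [Finset.sum_const]; simp [Finset.card_univ]
  obtain ⟨s, -, hs⟩ := Finset.exists_le_of_sum_le
    (f := fun _ : Fin n → Bool => (n:ℝ) * (Real.sqrt n / Real.sqrt 3))
    (g := fun s : Fin n → Bool => ∑ i, |∑ j, a i j * gbEps (s j)|)
    (Finset.univ_nonempty (α := Fin n → Bool))
    (by rw [hconst]; exact total)
  -- build x and y
  refine ⟨fun i => if 0 ≤ ∑ j, a i j * gbEps (s j) then 1 else -1,
    fun j => gbEps (s j), ?_, ?_, ?_⟩
  · intro i; dsimp only; split <;> norm_num
  · intro j; cases s j <;> norm_num [gbEps]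
  · have hx : ∀ i : Fin n,
        (if 0 ≤ ∑ j, a i j * gbEps (s j) then (1:ℝ) else -1)
          * (∑ j, a i j * gbEps (s j)) = |∑ j, a i j * gbEps (s j)| := by
      intro i
      split
      · rw [one_mul, abs_of_nonneg (by assumption)]
      · rw [abs_of_neg (by linarith [lt_of_not_ge (by assumption)]), neg_one_mul]
    have sum_eq : ∑ i, ∑ j, a i j
        * (if 0 ≤ ∑ k, a i k * gbEps (s k) then (1:ℝ) else -1) * gbEps (s j)
        = ∑ i, |∑ j, a i j * gbEps (s j)| := by
      refine Finset.sum_congr rfl fun i _ => ?_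
      rw [← hx i, Finset.mul_sum]
      refine Finset.sum_congr rfl fun j _ => ?_
      ring
    rw [sum_eq]
    refine le_trans ?_ hs
    -- (n:ℝ)^(3/2)/√3 = n * √n / √3
    have hnpos : (0:ℝ) < n := by exact_mod_cast hn
    have hrw : (n:ℝ) ^ ((3:ℝ)/2) = (n:ℝ) * Real.sqrt n := by
      rw [Real.sqrt_eq_rpow, show ((3:ℝ)/2) = 1 + 1/2 by norm_num,
        Real.rpow_add hnpos, Real.rpow_one]
    rw [hrw, div_eq_mul_inv, mul_assoc, ← div_eq_mul_inv]
end

section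
/- Let G = (V,E) be a finite simple graph with a linear order on V such that u < v implies deg(u) ≤ deg(v). For a marking vector X ∈ {0,1}^V, let I be the set of vertices w with X(w) = 1 and X(u) = 0 for all neighbors u of w with u > w. Then I is an independent set in G, and for every w ∈ V, [w ∈ I] ≥ X(w) − Σ_{(w,u)∈E, w<u} X(w)X(u). -/
open Finset
open scoped Classical

/-- Luby's FIND-IS unmarking step: given a marking `X ∈ {0,1}^V` and vertex ordering
compatible with degrees, the set `I` of marked vertices with no higher-ordered marked
neighbor is independent, and `[w ∈ I] ≥ X(w) − Σ_{(w,u)∈E, w<u} X(w)X(u)`. -/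
theorem find_is_estimator (V : Type*) [Fintype V] [LinearOrder V]
    (G : SimpleGraph V) [DecidableRel G.Adj]
    (hdeg : ∀ u v : V, u < v → G.degree u ≤ G.degree v)
    (X : V → ℝ) (hX : ∀ v, X v = 0 ∨ X v = 1) :
    let I : Set V := {w | X w = 1 ∧ ∀ u, G.Adj w u → w < u → X u = 0}
    (∀ v ∈ I, ∀ u ∈ I, ¬ G.Adj v u) ∧
    (∀ w : V,
      X w - ∑ u ∈ (G.neighborFinset w).filter (fun u => w < u), X w * X u
        ≤ (if w ∈ I then (1 : ℝ) else 0)) := by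
  intro I
  have hnn : ∀ v, (0:ℝ) ≤ X v := fun v => by rcases hX v with h | h <;> simp [h]
  have hle1 : ∀ v, X v ≤ 1 := fun v => by rcases hX v with h | h <;> simp [h]
  constructor
  · rintro v ⟨hv1, hv2⟩ u ⟨hu1, hu2⟩ hadj
    rcases lt_trichotomy v u with h | h | h
    · exact absurd hu1 (by rw [hv2 u hadj h]; norm_num)
    · exact G.loopless.irrefl v (h ▸ hadj)
    · exact absurd hv1 (by rw [hu2 v hadj.symm h]; norm_num)
  · intro w
    have hsum0 : (0:ℝ) ≤ ∑ u ∈ (G.neighborFinset w).filter (fun u => w < u), X w * X u :=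
      Finset.sum_nonneg fun u _ => mul_nonneg (hnn w) (hnn u)
    by_cases hw : w ∈ I
    · simp only [hw, if_pos]
      linarith [hle1 w]
    · simp only [hw, if_neg, not_false_iff]
      rcases hX w with h0 | h1
      · have : ∑ u ∈ (G.neighborFinset w).filter (fun u => w < u), X w * X u = 0 := by
          apply Finset.sum_eq_zero; intro u _; rw [h0, zero_mul]
        rw [this] at hsum0 ⊢
        simp [h0]
      · have : ∃ u, G.Adj w u ∧ w < u ∧ X u = 1 := by
          by_contra hc
          push_neg at hc
          exact hw ⟨h1, fun u ha hlt => (hX u).resolve_right (hc u ha hlt)⟩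
        obtain ⟨u, hadj, hlt, hu1⟩ := this
        have hmem : u ∈ (G.neighborFinset w).filter (fun u => w < u) := by
          simp [hadj, hlt]
        have : (1:ℝ) ≤ ∑ u ∈ (G.neighborFinset w).filter (fun u => w < u), X w * X u := by
          have h := Finset.single_le_sum (f := fun u => X w * X u)
            (fun v _ => mul_nonneg (hnn w) (hnn v)) hmem
          simpa [h1, hu1] using h
        linarith [hle1 w]
end
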